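/- Define the run length of zeros r_n(x) = max{ k ≥ 0 : there exists 0 ≤ i ≤ n−k with ε_{i+1}(x) = ⋯ = ε_{i+k}(x) = 0 }. Then for μ-almost all x ∈ [0,1), liminf_{n→∞} log r_n(x) / log n ≥ α. -/

import Mathlib

open MeasureTheory Filter Real Set

/-- The intermittent (Liverani–Saussol–Vaienti) map. -/
noncomputable def T (α : ℝ) (x : ℝ) : ℝ :=
  if x < 1/2 then x * (1 + 2 ^ α * x ^ α) else 2 * x - 1

/-- The longest run of zero digits among ε₁(x),…,εₙ(x), where εₖ(x) = 0 iff T^[k-1] x ∈ [0,1/2). -/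
noncomputable def runZero (α : ℝ) (n : ℕ) (x : ℝ) : ℕ :=
  sSup {k | ∃ i, i + k ≤ n ∧ ∀ j < k, (T α)^[i + j] x < 1/2}

/-- The longest run of one digits among ε₁(x),…,εₙ(x), where εₖ(x) = 1 iff T^[k-1] x ∈ [1/2,1). -/
noncomputable def runOne (α : ℝ) (n : ℕ) (x : ℝ) : ℕ :=
  sSup {k | ∃ i, i + k ≤ n ∧ ∀ j < k, 1/2 ≤ (T α)^[i + j] x}

/-- Cylinder set of length `m` with digit word `w` in the dynamical partition of `T α`
generated by `{[0,1/2), [1/2,1)}` (digit `false` = left branch, `true` = right branch). -/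
def cyl (α : ℝ) (w : ℕ → Bool) (m : ℕ) : Set ℝ :=
  {x | x ∈ Set.Ico (0:ℝ) 1 ∧ ∀ j < m, ((T α)^[j] x < 1/2 ↔ w j = false)}

lemma measurable_T {α : ℝ} (hα0 : 0 ≤ α) : Measurable (T α) := by
  unfold T
  apply Measurable.ite (measurableSet_lt measurable_id measurable_const)
  · exact measurable_id.mul
      (measurable_const.add (measurable_const.mul (Real.continuous_rpow_const hα0).measurable))
  · fun_prop

lemma measurable_T_iter {α : ℝ} (hα0 : 0 ≤ α) (n : ℕ) : Measurable ((T α)^[n]) :=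
  (measurable_T hα0).iterate n

lemma T_mapsTo {α : ℝ} (hα0 : 0 < α) : Set.MapsTo (T α) (Ico 0 1) (Ico 0 1) := by
  rintro x ⟨hx0, hx1⟩
  unfold T
  split_ifs with h
  · constructor
    · have : (0:ℝ) ≤ x ^ α := Real.rpow_nonneg hx0 α
      have : (0:ℝ) ≤ 1 + 2 ^ α * x ^ α := by positivity
      positivity
    · have hxa : x ^ α ≤ (1/2 : ℝ) ^ α := Real.rpow_le_rpow hx0 h.le hα0.le
      have h2 : (2:ℝ) ^ α * (1/2 : ℝ) ^ α = 1 := by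
        rw [← Real.mul_rpow (by norm_num) (by norm_num)]
        norm_num
      have : x * (1 + 2 ^ α * x ^ α) ≤ x * 2 := by
        apply mul_le_mul_of_nonneg_left _ hx0
        have : (2:ℝ) ^ α * x ^ α ≤ 2 ^ α * (1/2:ℝ) ^ α :=
          mul_le_mul_of_nonneg_left hxa (by positivity)
        rw [h2] at this; linarith
      linarith
  · push_neg at h
    constructor <;> [linarith; linarith]

lemma T_iter_mapsTo {α : ℝ} (hα0 : 0 < α) (n : ℕ) :
    Set.MapsTo ((T α)^[n]) (Ico 0 1) (Ico 0 1) :=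
  (T_mapsTo hα0).iterate n

lemma measurableSet_cyl {α : ℝ} (hα0 : 0 ≤ α) (w : ℕ → Bool) (m : ℕ) : MeasurableSet (cyl α w m) := by
  have : cyl α w m = Ico 0 1 ∩ ⋂ j, ⋂ (_ : j < m), {x | ((T α)^[j] x < 1/2 ↔ w j = false)} := by
    ext x; simp [cyl, Set.mem_iInter]
  rw [this]
  refine measurableSet_Ico.inter (MeasurableSet.iInter fun j => MeasurableSet.iInter fun _ => ?_)
  have hlt : MeasurableSet {x : ℝ | (T α)^[j] x < 1/2} :=
    measurableSet_lt (measurable_T_iter hα0 j) measurable_const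
  rcases Bool.eq_false_or_eq_true (w j) with h | h
  · simp only [h, Bool.true_eq_false, iff_false]
    exact hlt.compl
  · simp only [h, iff_true]
    exact hlt

def Gset (α : ℝ) (k s : ℕ) : ℕ → Set ℝ
  | 0 => Set.Ico 0 1
  | N+1 => (Set.Ico (0:ℝ) 1 \ cyl α (fun _ => false) k) ∩ (T α)^[s] ⁻¹' Gset α k s N

lemma measurableSet_Gset {α : ℝ} (hα0 : 0 ≤ α) (k s N : ℕ) : MeasurableSet (Gset α k s N) := by
  induction N with
  | zero => exact measurableSet_Ico
  | succ N ih =>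
    exact (measurableSet_Ico.diff (measurableSet_cyl hα0 _ k)).inter
      (ih.preimage (measurable_T_iter hα0 s))

lemma Gset_escape {α : ℝ} (hα0 : 0 < α) (k s : ℕ) :
    ∀ N, ∀ x ∈ Ico (0:ℝ) 1, x ∉ Gset α k s N →
      ∃ i < N, ∀ j < k, (T α)^[i*s + j] x < 1/2 := by
  intro N
  induction N with
  | zero => intro x hx hxn; exact absurd hx hxn
  | succ N ih =>
    intro x hx hxn
    by_cases hA : x ∈ cyl α (fun _ => false) k
    · exact ⟨0, Nat.succ_pos N, fun j hj => by simpa using (hA.2 j hj).mpr rfl⟩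
    · have hx2 : (T α)^[s] x ∉ Gset α k s N := by
        intro hmem
        exact hxn ⟨⟨hx, hA⟩, hmem⟩
      obtain ⟨i, hiN, hi⟩ := ih ((T α)^[s] x) (T_iter_mapsTo hα0 s hx) hx2
      refine ⟨i + 1, by omega, fun j hj => ?_⟩
      have := hi j hj
      rwa [← Function.iterate_add_apply, show i*s + j + s = (i+1)*s + j by ring] at this
lemma summable_exp_neg_c_rpow (c δ : ℝ) (hc : 0 < c) (hδ : 0 < δ) :
    Summable (fun n : ℕ => Real.exp (-(c * (n:ℝ) ^ δ))) := by
  apply summable_of_isBigO_nat (Real.summable_nat_rpow.2 (show (-2:ℝ) < -1 by norm_num))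
  rw [Asymptotics.isBigO_iff]
  refine ⟨1, ?_⟩
  have hlog : ∀ᶠ x : ℝ in atTop, ‖Real.log x‖ ≤ c/2 * ‖x ^ δ‖ :=
    (isLittleO_log_rpow_atTop hδ).def (by positivity)
  filter_upwards [eventually_ge_atTop 1, tendsto_natCast_atTop_atTop.eventually hlog]
    with n hn1 hnlog
  have hn0 : (0:ℝ) < (n:ℝ) := by exact_mod_cast hn1
  have hrpos : (0:ℝ) < (n:ℝ) ^ δ := Real.rpow_pos_of_pos hn0 δ
  have hlogn : Real.log n ≤ c/2 * (n:ℝ) ^ δ := by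
    have h1 : Real.log n ≤ ‖Real.log n‖ := le_abs_self _
    have h2 : ‖(n:ℝ) ^ δ‖ = (n:ℝ) ^ δ := abs_of_pos hrpos
    rw [h2] at hnlog; linarith
  have hval : (n:ℝ) ^ (-2:ℝ) = Real.exp (Real.log n * (-2)) :=
    Real.rpow_def_of_pos hn0 _
  rw [Real.norm_eq_abs, Real.norm_eq_abs, Real.abs_exp, hval,
    abs_of_pos (Real.exp_pos _), one_mul]
  apply Real.exp_le_exp.2
  nlinarith [Real.log_nonneg (by exact_mod_cast hn1 : (1:ℝ) ≤ (n:ℝ))]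

set_option maxHeartbeats 2000000 in
theorem key (α : ℝ) (hα0 : 0 < α) (hα1 : α < 1)
    (μ : Measure ℝ) [IsProbabilityMeasure μ]
    (hinv : MeasurePreserving (T α) μ μ)
    (C₁ : ℝ) (hC₁ : 0 < C₁) (l : ℕ)
    (hdecay : ∀ (m : ℕ) (w : ℕ → Bool) (B : Set ℝ), MeasurableSet B → ∀ n : ℕ, l < n →
      |(μ (cyl α w m ∩ ((T α)^[n + m]) ⁻¹' B)).toReal
          - (μ (cyl α w m)).toReal * (μ B).toReal|
        ≤ C₁ * (m : ℝ) ^ (1/α - 1) * ((n : ℝ) - l) ^ (-(1/α - 1))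
            * (μ (cyl α w m)).toReal * (μ B).toReal)
    (Ct : ℝ) (hCt : 1 < Ct)
    (hcyl : ∀ k : ℕ, 1 ≤ k →
      Ct⁻¹ * (k : ℝ) ^ (-(1/α - 1)) ≤ (μ (cyl α (fun _ => false) k)).toReal ∧
      (μ (cyl α (fun _ => false) k)).toReal ≤ Ct * (k : ℝ) ^ (-(1/α - 1)))
    (β : ℝ) (hβ0 : 0 < β) (hβα : β < α) :
    ∀ᵐ x ∂μ, ∀ᶠ n : ℕ in atTop, ⌈(n:ℝ) ^ β⌉₊ ≤ runZero α n x := by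
  have hα0' : (0:ℝ) ≤ α := hα0.le
  set θ : ℝ := 1/α - 1 with hθdef
  have hθ : 0 < θ := by
    rw [hθdef]
    have : 1 < 1/α := by rw [lt_div_iff₀ hα0]; linarith
    linarith
  -- μ(Ico 0 1) = 1
  have hIcomem : ∀ n : ℕ, ∀ x ∈ Ico (0:ℝ) 1, (T α)^[n] x ∈ Ico (0:ℝ) 1 :=
    fun n x hx => T_iter_mapsTo hα0 n hx
  have hcyl0 : cyl α (fun _ => false) 0 = Ico (0:ℝ) 1 := by
    ext x; simp [cyl]
  have hI : μ (Ico (0:ℝ) 1) = 1 := by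
    have h1 := hdecay 0 (fun _ => false) (Ico (0:ℝ) 1) measurableSet_Ico (l+1) (by omega)
    rw [hcyl0] at h1
    have hinter : Ico (0:ℝ) 1 ∩ (T α)^[l+1+0] ⁻¹' Ico (0:ℝ) 1 = Ico (0:ℝ) 1 := by
      apply Set.inter_eq_self_of_subset_left
      intro x hx; exact hIcomem _ x hx
    rw [hinter] at h1
    have hz : ((0:ℕ):ℝ) ^ (1/α - 1) = 0 := by
      rw [Nat.cast_zero]; exact Real.zero_rpow (by rw [← hθdef]; exact hθ.ne')
    rw [hz] at h1
    simp only [mul_zero, zero_mul, mul_comm] at h1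
    set t := (μ (Ico (0:ℝ) 1)).toReal with ht
    have htt : t = t * t := by
      have := abs_nonpos_iff.1 (by linarith [h1] : |t - t*t| ≤ 0)
      linarith
    have htlb : Ct⁻¹ ≤ t := by
      have h2 := (hcyl 1 le_rfl).1
      have h3 : (μ (cyl α (fun _ => false) 1)).toReal ≤ t := by
        apply ENNReal.toReal_mono (measure_ne_top μ _)
        exact measure_mono (fun x hx => hx.1)
      have h4 : ((1:ℕ):ℝ) ^ (-(1/α-1)) = 1 := by
        rw [Nat.cast_one, Real.one_rpow]
      rw [h4, mul_one] at h2
      linarith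
    have ht1 : t = 1 := by
      have hCtpos : (0:ℝ) < Ct⁻¹ := by positivity
      have : t * (t - 1) = 0 := by nlinarith [htt]
      rcases mul_eq_zero.1 this with h | h
      · linarith
      · linarith
    rwa [← ENNReal.toReal_eq_one_iff]
  have hIcompl : μ (Ico (0:ℝ) 1)ᶜ = 0 := by
    have := measure_compl (measurableSet_Ico : MeasurableSet (Ico (0:ℝ) 1)) (measure_ne_top μ _)
    rw [hI, measure_univ] at this
    simp [this]
  -- the gap constant
  set c₀ : ℕ := ⌈(2*C₁) ^ (1/θ)⌉₊ + 1 with hc₀def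
  have hc₀ : ((2*C₁) ^ (1/θ) : ℝ) ≤ (c₀:ℝ) := by
    refine (Nat.le_ceil _).trans ?_
    rw [hc₀def]; push_cast; linarith
  have hc₀1 : 1 ≤ c₀ := by omega
  -- one-step estimate
  have hstep : ∀ k : ℕ, 1 ≤ k → ∀ B : Set ℝ, MeasurableSet B →
      Ct⁻¹ * (k:ℝ) ^ (-θ) / 2 * (μ B).toReal ≤
        (μ (cyl α (fun _ => false) k ∩ ((T α)^[(l + c₀*k) + k]) ⁻¹' B)).toReal := by
    intro k hk B hB
    have hkpos : (0:ℝ) < (k:ℝ) := by exact_mod_cast hk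
    have hd := hdecay k (fun _ => false) B hB (l + c₀*k) (by nlinarith [hc₀1, hk])
    set p := (μ (cyl α (fun _ => false) k)).toReal with hp
    have hplb : Ct⁻¹ * (k:ℝ) ^ (-θ) ≤ p := (hcyl k hk).1
    have hBnn : 0 ≤ (μ B).toReal := ENNReal.toReal_nonneg
    have hpnn : 0 ≤ p := ENNReal.toReal_nonneg
    have hcast : ((l + c₀*k : ℕ) : ℝ) - (l:ℝ) = (c₀:ℝ) * (k:ℝ) := by push_cast; ring
    have h2C : (0:ℝ) < 2*C₁ := by linarith
    have hbpos : (0:ℝ) < (2*C₁) ^ (1/θ) := Real.rpow_pos_of_pos h2C _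
    have herr : C₁ * (k:ℝ) ^ θ * ((c₀:ℝ) * (k:ℝ)) ^ (-θ) ≤ 1/2 := by
      have h1 : ((c₀:ℝ) * (k:ℝ)) ^ (-θ) ≤ ((2*C₁) ^ (1/θ) * (k:ℝ)) ^ (-θ) := by
        apply Real.rpow_le_rpow_of_nonpos (by positivity)
          (mul_le_mul_of_nonneg_right hc₀ hkpos.le) (by linarith)
      have h2 : ((2*C₁) ^ (1/θ) * (k:ℝ)) ^ (-θ) = (2*C₁)⁻¹ * (k:ℝ) ^ (-θ) := by
        rw [Real.mul_rpow hbpos.le hkpos.le, ← Real.rpow_mul h2C.le]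
        congr 1
        rw [show (1/θ) * (-θ) = -1 by field_simp, Real.rpow_neg_one]
      have hkk : (k:ℝ) ^ θ * (k:ℝ) ^ (-θ) = 1 := by
        rw [← Real.rpow_add hkpos]; simp
      rw [h2] at h1
      have hkθnn : (0:ℝ) ≤ (k:ℝ) ^ θ := Real.rpow_nonneg hkpos.le _
      calc C₁ * (k:ℝ) ^ θ * ((c₀:ℝ) * (k:ℝ)) ^ (-θ)
          ≤ C₁ * (k:ℝ) ^ θ * ((2*C₁)⁻¹ * (k:ℝ) ^ (-θ)) := by
            apply mul_le_mul_of_nonneg_left h1 (by positivity)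
        _ = (C₁ * (2*C₁)⁻¹) * ((k:ℝ) ^ θ * (k:ℝ) ^ (-θ)) := by ring
        _ = 1/2 := by rw [hkk]; field_simp
    rw [hcast] at hd
    have habs := abs_le.1 hd
    have hmain : p * (μ B).toReal - 1/2 * (p * (μ B).toReal) ≤
        (μ (cyl α (fun _ => false) k ∩ ((T α)^[(l + c₀*k) + k]) ⁻¹' B)).toReal := by
      have hle : C₁ * (k:ℝ) ^ θ * ((c₀:ℝ) * (k:ℝ)) ^ (-θ) * p * (μ B).toReal ≤
          1/2 * (p * (μ B).toReal) := by
        have := mul_le_mul_of_nonneg_right herr (mul_nonneg hpnn hBnn)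
        nlinarith
      nlinarith [habs.1]
    calc Ct⁻¹ * (k:ℝ) ^ (-θ) / 2 * (μ B).toReal
        ≤ p / 2 * (μ B).toReal := by
          apply mul_le_mul_of_nonneg_right _ hBnn
          linarith
      _ = p * (μ B).toReal - 1/2 * (p * (μ B).toReal) := by ring
      _ ≤ _ := hmain
  -- iterated estimate
  have hGle : ∀ k : ℕ, 1 ≤ k → ∀ N : ℕ,
      (μ (Gset α k ((l + c₀*k) + k) N)).toReal ≤ (1 - Ct⁻¹ * (k:ℝ) ^ (-θ) / 2)^N := by
    intro k hk N
    have hkpos : (0:ℝ) < (k:ℝ) := by exact_mod_cast hk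
    set q : ℝ := Ct⁻¹ * (k:ℝ) ^ (-θ) with hqdef
    have hq0 : 0 < q := by
      have := Real.rpow_pos_of_pos hkpos (-θ)
      positivity
    have hq1 : q ≤ 1 := by
      have h1 : (k:ℝ) ^ (-θ) ≤ 1 :=
        Real.rpow_le_one_of_one_le_of_nonpos (by exact_mod_cast hk) (by linarith)
      have h2 : Ct⁻¹ ≤ 1 := by
        rw [inv_le_one_iff₀]; right; linarith
      calc q ≤ Ct⁻¹ * 1 := by
              apply mul_le_mul_of_nonneg_left h1 (by positivity)
        _ ≤ 1 := by linarith
    set s : ℕ := (l + c₀*k) + k with hsdef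
    set A : Set ℝ := cyl α (fun _ => false) k with hAdef
    have hAm : MeasurableSet A := measurableSet_cyl hα0' _ k
    induction N with
    | zero =>
      simp only [Gset, pow_zero]
      rw [hI]; simp
    | succ N ih =>
      set G : Set ℝ := Gset α k s N with hGdef
      have hGm : MeasurableSet G := measurableSet_Gset hα0' k s N
      set P : Set ℝ := (T α)^[s] ⁻¹' G with hPdef
      have hPm : MeasurableSet P := hGm.preimage (measurable_T_iter hα0' s)
      have hμP : μ P = μ G := (hinv.iterate s).measure_preimage hGm.nullMeasurableSet
      have hIP : μ (Ico (0:ℝ) 1 ∩ P) = μ G := by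
        have h1 : μ P = μ (P ∩ Ico (0:ℝ) 1) + μ (P \ Ico (0:ℝ) 1) :=
          (measure_inter_add_diff P measurableSet_Ico).symm
        have h2 : μ (P \ Ico (0:ℝ) 1) = 0 :=
          le_antisymm (le_trans (measure_mono (diff_subset_compl _ _)) hIcompl.le) zero_le
        rw [h2, add_zero] at h1
        rw [Set.inter_comm, ← h1, hμP]
      have hsplit : μ (Ico (0:ℝ) 1 ∩ P) = μ (A ∩ P) + μ (Gset α k s (N+1)) := by
        have h1 : μ (Ico (0:ℝ) 1 ∩ P) =
            μ ((Ico (0:ℝ) 1 ∩ P) ∩ A) + μ ((Ico (0:ℝ) 1 ∩ P) \ A) :=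
          (measure_inter_add_diff (Ico (0:ℝ) 1 ∩ P) hAm).symm
        have e1 : (Ico (0:ℝ) 1 ∩ P) ∩ A = A ∩ P := by
          ext x; constructor
          · rintro ⟨⟨_, hP⟩, hA⟩; exact ⟨hA, hP⟩
          · rintro ⟨hA, hP⟩; exact ⟨⟨hA.1, hP⟩, hA⟩
        have e2 : (Ico (0:ℝ) 1 ∩ P) \ A = Gset α k s (N+1) := by
          show _ = (Ico (0:ℝ) 1 \ A) ∩ P
          ext x; constructor
          · rintro ⟨⟨hI', hP⟩, hA⟩; exact ⟨⟨hI', hA⟩, hP⟩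
          · rintro ⟨⟨hI', hA⟩, hP⟩; exact ⟨⟨hI', hP⟩, hA⟩
        rw [e1, e2] at h1
        exact h1
      have hreal : (μ G).toReal = (μ (A ∩ P)).toReal + (μ (Gset α k s (N+1))).toReal := by
        rw [← hIP, hsplit]
        exact ENNReal.toReal_add (measure_ne_top μ _) (measure_ne_top μ _)
      have hAP : q / 2 * (μ G).toReal ≤ (μ (A ∩ P)).toReal := by
        have h := hstep k hk G hGm
        calc q / 2 * (μ G).toReal = Ct⁻¹ * (k:ℝ) ^ (-θ) / 2 * (μ G).toReal := by rw [hqdef]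
          _ ≤ _ := h
      have hGN : (μ G).toReal ≤ (1 - q/2)^N := ih
      have h1q : (0:ℝ) ≤ 1 - q/2 := by linarith
      have hGnn : (0:ℝ) ≤ (μ G).toReal := ENNReal.toReal_nonneg
      calc (μ (Gset α k s (N+1))).toReal = (μ G).toReal - (μ (A ∩ P)).toReal := by linarith
        _ ≤ (1 - q/2) * (μ G).toReal := by rw [sub_mul, one_mul]; linarith
        _ ≤ (1 - q/2) * (1 - q/2)^N := mul_le_mul_of_nonneg_left hGN h1q
        _ = (1 - q/2)^(N+1) := by ring
  -- parameters per n
  set kf : ℕ → ℕ := fun n => ⌈(n:ℝ)^β⌉₊ with hkfdef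
  set sf : ℕ → ℕ := fun n => (l + c₀ * kf n) + kf n with hsfdef
  set Nf : ℕ → ℕ := fun n => n / sf n with hNfdef
  set D : ℕ → Set ℝ := fun n => Gset α (kf n) (sf n) (Nf n) with hDdef
  set δ : ℝ := 1 - β/α with hδdef
  have hδ : 0 < δ := by
    rw [hδdef]
    have : β/α < 1 := (div_lt_one hα0).2 hβα
    linarith
  set c5 : ℝ := 2*((l:ℝ) + (c₀:ℝ) + 1) with hc5def
  have hc5 : 0 < c5 := by rw [hc5def]; positivity
  set c6 : ℝ := Ct⁻¹ * (2:ℝ)^(-θ) / (2*c5) with hc6def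
  have hc6 : 0 < c6 := by
    rw [hc6def]
    have h2 : (0:ℝ) < (2:ℝ)^(-θ) := Real.rpow_pos_of_pos (by norm_num) _
    have hCt0 : (0:ℝ) < Ct⁻¹ := by positivity
    positivity
  set c7 : ℝ := Ct⁻¹ / 2 with hc7def
  have hc7 : 0 < c7 := by rw [hc7def]; positivity
  -- main per-n estimate
  have hmain : ∀ n : ℕ, 1 ≤ n →
      (μ (D n)).toReal ≤ Real.exp c7 * Real.exp (-(c6 * (n:ℝ)^δ)) := by
    intro n hn
    have hn0 : (0:ℝ) < (n:ℝ) := by exact_mod_cast hn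
    have hnb1 : (1:ℝ) ≤ (n:ℝ)^β := by
      calc (1:ℝ) = 1 ^ β := (Real.one_rpow β).symm
        _ ≤ (n:ℝ)^β := Real.rpow_le_rpow (by norm_num) (by exact_mod_cast hn) hβ0.le
    have hbpos : (0:ℝ) < (n:ℝ)^β := by linarith
    have hk1 : 1 ≤ kf n := Nat.one_le_iff_ne_zero.2 (by
      simp only [hkfdef]
      exact (Nat.ceil_pos.2 hbpos).ne')
    have hkpos : (0:ℝ) < (kf n : ℝ) := by exact_mod_cast hk1
    have hklb : (n:ℝ)^β ≤ (kf n : ℝ) := by simp only [hkfdef]; exact Nat.le_ceil _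
    have hkub : (kf n : ℝ) ≤ 2 * (n:ℝ)^β := by
      have h := Nat.ceil_lt_add_one hbpos.le (R := ℝ)
      simp only [hkfdef]
      linarith
    have hsval : sf n = (l + c₀ * kf n) + kf n := by simp only [hsfdef]
    have hspos : 0 < sf n := by omega
    have hsposR : (0:ℝ) < (sf n : ℝ) := by exact_mod_cast hspos
    have hsubR : ((sf n : ℕ) : ℝ) ≤ c5 * (n:ℝ)^β := by
      rw [hsval, hc5def]
      push_cast
      have hc₀R : (0:ℝ) ≤ (c₀:ℝ) := by positivity
      have hlR : (0:ℝ) ≤ (l:ℝ) := by positivity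
      nlinarith [mul_le_mul_of_nonneg_left hkub hc₀R, mul_le_mul_of_nonneg_left hnb1 hlR]
    have hNlbR : (n:ℝ)/(sf n) - 1 ≤ (Nf n : ℝ) := by
      have h := Nat.lt_div_mul_add hspos (a := n)
      have h2 : (n:ℝ) < ((Nf n : ℝ) + 1) * (sf n : ℝ) := by
        have : (n:ℝ) < (Nf n : ℝ) * (sf n:ℝ) + (sf n:ℝ) := by exact_mod_cast h
        linarith
      have h3 : (n:ℝ)/(sf n) < (Nf n : ℝ) + 1 := by
        rw [div_lt_iff₀ hsposR]; exact h2
      linarith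
    set q : ℝ := Ct⁻¹ * ((kf n : ℕ):ℝ)^(-θ) with hqdef
    have hqnn : 0 ≤ q := by
      rw [hqdef]
      have := Real.rpow_nonneg hkpos.le (-θ)
      positivity
    have hqlb : Ct⁻¹ * (2:ℝ)^(-θ) * (n:ℝ)^(-(β*θ)) ≤ q := by
      have h1 : (2*(n:ℝ)^β)^(-θ) ≤ ((kf n:ℕ):ℝ)^(-θ) :=
        Real.rpow_le_rpow_of_nonpos hkpos hkub (by linarith)
      have h2 : (2*(n:ℝ)^β)^(-θ) = (2:ℝ)^(-θ) * (n:ℝ)^(-(β*θ)) := by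
        rw [Real.mul_rpow (by norm_num) hbpos.le, ← Real.rpow_mul hn0.le, mul_neg]
      rw [hqdef, mul_assoc]
      rw [h2] at h1
      have hCtnn : (0:ℝ) ≤ Ct⁻¹ := by positivity
      calc Ct⁻¹ * ((2:ℝ)^(-θ) * (n:ℝ)^(-(β*θ)))
          ≤ Ct⁻¹ * ((kf n:ℕ):ℝ)^(-θ) := mul_le_mul_of_nonneg_left h1 hCtnn
        _ = _ := by ring
    have hqub : q ≤ Ct⁻¹ := by
      rw [hqdef]
      have h1 : ((kf n:ℕ):ℝ)^(-θ) ≤ 1 :=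
        Real.rpow_le_one_of_one_le_of_nonpos (by exact_mod_cast hk1) (by linarith)
      have hCtnn : (0:ℝ) ≤ Ct⁻¹ := by positivity
      nlinarith
    -- lower bound on N q / 2
    have hkey : c6 * (n:ℝ)^δ - c7 ≤ (Nf n : ℝ) * q / 2 := by
      have e1 : ((n:ℝ)/(sf n) - 1) * q ≤ (Nf n:ℝ) * q :=
        mul_le_mul_of_nonneg_right hNlbR hqnn
      rw [sub_mul, one_mul] at e1
      have e2 : (n:ℝ)/(c5 * (n:ℝ)^β) ≤ (n:ℝ)/(sf n) :=
        div_le_div_of_nonneg_left hn0.le hsposR hsubR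
      have e3 : (n:ℝ)/(c5 * (n:ℝ)^β) * (Ct⁻¹ * (2:ℝ)^(-θ) * (n:ℝ)^(-(β*θ))) ≤
          (n:ℝ)/(sf n) * q := by
        apply mul_le_mul e2 hqlb _ (div_nonneg hn0.le hsposR.le)
        have h2 : (0:ℝ) ≤ (2:ℝ)^(-θ) := (Real.rpow_pos_of_pos (by norm_num) _).le
        have h3 : (0:ℝ) ≤ (n:ℝ)^(-(β*θ)) := Real.rpow_nonneg hn0.le _
        positivity
      have e4 : (n:ℝ)/(c5 * (n:ℝ)^β) * (Ct⁻¹ * (2:ℝ)^(-θ) * (n:ℝ)^(-(β*θ))) =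
          2 * c6 * (n:ℝ)^δ := by
        have key1 : (n:ℝ)^(1:ℝ) * (n:ℝ)^(-β) * (n:ℝ)^(-(β*θ)) = (n:ℝ)^δ := by
          rw [← Real.rpow_add hn0, ← Real.rpow_add hn0]
          congr 1
          rw [hδdef, hθdef]; ring
        have key1' : (n:ℝ) * (n:ℝ)^(-β) * (n:ℝ)^(-(β*θ)) = (n:ℝ)^δ := by
          rw [← key1, Real.rpow_one]
        have key2 : (n:ℝ)^(-β) = ((n:ℝ)^β)⁻¹ := Real.rpow_neg hn0.le β
        rw [hc6def, ← key1', key2]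
        field_simp
      have e5 : q ≤ 2 * c7 := by rw [hc7def]; linarith
      rw [e4] at e3
      linarith
    -- conclude
    have hq1 : q ≤ 1 := by
      have : Ct⁻¹ ≤ 1 := by
        rw [inv_le_one_iff₀]; right; linarith
      linarith
    have hq2 : (0:ℝ) ≤ 1 - q/2 := by linarith
    have hDG : (μ (D n)).toReal = (μ (Gset α (kf n) ((l + c₀ * kf n) + kf n) (Nf n))).toReal := by
      rw [hDdef, ← hsval]
    calc (μ (D n)).toReal
        ≤ (1 - q/2)^(Nf n) := by
          rw [hDG]
          have := hGle (kf n) hk1 (Nf n)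
          rw [hqdef]
          exact this
      _ ≤ Real.exp (-(q/2)) ^ (Nf n) :=
          pow_le_pow_left₀ hq2 (by linarith [Real.add_one_le_exp (-(q/2))]) _
      _ = Real.exp ((Nf n : ℝ) * (-(q/2))) := (Real.exp_nat_mul _ _).symm
      _ ≤ Real.exp (c7 - c6 * (n:ℝ)^δ) := by
          apply Real.exp_le_exp.2
          rw [show ((Nf n:ℝ)) * (-(q/2)) = -((Nf n:ℝ)*q/2) by ring]
          linarith
      _ = Real.exp c7 * Real.exp (-(c6 * (n:ℝ)^δ)) := by
          rw [← Real.exp_add]; ring_nf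
  -- summability and Borel--Cantelli
  have hfnn : ∀ n : ℕ, (0:ℝ) ≤ Real.exp c7 * Real.exp (-(c6 * (n:ℝ)^δ)) := fun n => by positivity
  have hsumf : Summable (fun n : ℕ => Real.exp c7 * Real.exp (-(c6 * (n:ℝ)^δ))) :=
    (summable_exp_neg_c_rpow c6 δ hc6 hδ).mul_left _
  have hD0 : ∀ n : ℕ, (μ (D n)).toReal ≤ Real.exp c7 * Real.exp (-(c6 * (n:ℝ)^δ)) := by
    intro n
    rcases Nat.eq_zero_or_pos n with h | h
    · subst h
      have h0 : ((0:ℕ):ℝ)^δ = 0 := by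
        rw [Nat.cast_zero]; exact Real.zero_rpow hδ.ne'
      have heq : Real.exp c7 * Real.exp (-(c6 * ((0:ℕ):ℝ)^δ)) = Real.exp c7 := by
        rw [h0, mul_zero, neg_zero, Real.exp_zero, mul_one]
      rw [heq]
      have h1 : (μ (D 0)).toReal ≤ 1 := by
        simpa using ENNReal.toReal_mono ENNReal.one_ne_top prob_le_one
      have h2 : (1:ℝ) ≤ Real.exp c7 := by
        linarith [Real.add_one_le_exp c7]
      linarith
    · exact hmain n h
  have htsum : (∑' n, μ (D n)) ≠ ⊤ := by
    have hle : (∑' n, μ (D n)) ≤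
        ∑' n : ℕ, ENNReal.ofReal (Real.exp c7 * Real.exp (-(c6 * (n:ℝ)^δ))) := by
      apply ENNReal.tsum_le_tsum
      intro n
      rw [← ENNReal.ofReal_toReal (measure_ne_top μ (D n))]
      exact ENNReal.ofReal_le_ofReal (hD0 n)
    have heq : (∑' n : ℕ, ENNReal.ofReal (Real.exp c7 * Real.exp (-(c6 * (n:ℝ)^δ)))) =
        ENNReal.ofReal (∑' n : ℕ, Real.exp c7 * Real.exp (-(c6 * (n:ℝ)^δ))) :=
      (ENNReal.ofReal_tsum_of_nonneg hfnn hsumf).symm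
    rw [heq] at hle
    exact ne_top_of_le_ne_top ENNReal.ofReal_ne_top hle
  have hBC : ∀ᵐ x ∂μ, ∀ᶠ n in atTop, x ∉ D n := ae_eventually_notMem htsum
  have hIae : ∀ᵐ x ∂μ, x ∈ Ico (0:ℝ) 1 := by
    rw [ae_iff]
    exact hIcompl
  filter_upwards [hBC, hIae] with x hx hxI
  filter_upwards [hx] with n hn
  have hn' : x ∉ Gset α (kf n) (sf n) (Nf n) := hn
  obtain ⟨i, hiN, hrun⟩ := Gset_escape hα0 (kf n) (sf n) (Nf n) x hxI hn'
  have hsval2 : sf n = (l + c₀ * kf n) + kf n := rfl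
  have hk_le_s : kf n ≤ sf n := by rw [hsval2]; exact Nat.le_add_left _ _
  have hsum1 : i * sf n + kf n ≤ n := by
    calc i * sf n + kf n ≤ i * sf n + sf n := Nat.add_le_add_left hk_le_s _
      _ = (i+1) * sf n := by ring
      _ ≤ Nf n * sf n := Nat.mul_le_mul_right _ hiN
      _ ≤ n := Nat.div_mul_le_self n (sf n)
  show kf n ≤ runZero α n x
  unfold runZero
  apply le_csSup
  · refine ⟨n, fun k' hk' => ?_⟩
    obtain ⟨i', hi', _⟩ := hk'
    omega
  · exact ⟨i * sf n, hsum1, fun j hj => hrun j hj⟩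

lemma runZero_le (α : ℝ) (n : ℕ) (x : ℝ) : runZero α n x ≤ n := by
  apply csSup_le
  · exact ⟨0, 0, by omega, fun j hj => absurd hj (Nat.not_lt_zero j)⟩
  · rintro k ⟨i, hi, -⟩
    omega

theorem stmt9 (α : ℝ) (hα0 : 0 < α) (hα1 : α < 1)
    (μ : Measure ℝ) [IsProbabilityMeasure μ]
    (hinv : MeasurePreserving (T α) μ μ) (hac : μ ≪ volume)
    (C₁ : ℝ) (hC₁ : 0 < C₁) (l : ℕ)
    (hdecay : ∀ (m : ℕ) (w : ℕ → Bool) (B : Set ℝ), MeasurableSet B → ∀ n : ℕ, l < n →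
      |(μ (cyl α w m ∩ ((T α)^[n + m]) ⁻¹' B)).toReal
          - (μ (cyl α w m)).toReal * (μ B).toReal|
        ≤ C₁ * (m : ℝ) ^ (1/α - 1) * ((n : ℝ) - l) ^ (-(1/α - 1))
            * (μ (cyl α w m)).toReal * (μ B).toReal)
    (Ct : ℝ) (hCt : 1 < Ct)
    (hcyl : ∀ k : ℕ, 1 ≤ k →
      Ct⁻¹ * (k : ℝ) ^ (-(1/α - 1)) ≤ (μ (cyl α (fun _ => false) k)).toReal ∧
      (μ (cyl α (fun _ => false) k)).toReal ≤ Ct * (k : ℝ) ^ (-(1/α - 1))) :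
    ∀ᵐ x ∂μ, α ≤ Filter.liminf
      (fun n : ℕ => Real.log (runZero α n x) / Real.log n) atTop := by
  have hβm : ∀ m : ℕ, 0 < α * ((m:ℝ)+1)/((m:ℝ)+2) ∧ α * ((m:ℝ)+1)/((m:ℝ)+2) < α := by
    intro m
    have h1 : (0:ℝ) < (m:ℝ)+1 := by positivity
    have h2 : (0:ℝ) < (m:ℝ)+2 := by positivity
    constructor
    · positivity
    · rw [div_lt_iff₀ h2]
      nlinarith
  have hae : ∀ᵐ x ∂μ, ∀ m : ℕ, ∀ᶠ n : ℕ in atTop,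
      ⌈(n:ℝ)^(α*((m:ℝ)+1)/((m:ℝ)+2))⌉₊ ≤ runZero α n x := by
    rw [ae_all_iff]
    intro m
    exact key α hα0 hα1 μ hinv C₁ hC₁ l hdecay Ct hCt hcyl _ (hβm m).1 (hβm m).2
  filter_upwards [hae] with x hx
  set f : ℕ → ℝ := fun n => Real.log (runZero α n x) / Real.log n with hfdef
  have hub : ∀ᶠ n : ℕ in atTop, f n ≤ 1 := by
    filter_upwards [eventually_ge_atTop 2] with n hn
    have hn1 : (1:ℝ) < (n:ℝ) := by exact_mod_cast hn
    have hlogn : 0 < Real.log n := Real.log_pos hn1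
    have hnum : Real.log (runZero α n x) ≤ Real.log n := by
      have hr : runZero α n x ≤ n := runZero_le α n x
      rcases Nat.eq_zero_or_pos (runZero α n x) with h | h
      · rw [h, Nat.cast_zero, Real.log_zero]
        exact hlogn.le
      · exact Real.log_le_log (by exact_mod_cast h) (by exact_mod_cast hr)
    exact div_le_one_of_le₀ hnum hlogn.le
  have hcob : IsCoboundedUnder (· ≥ ·) atTop f :=
    isCoboundedUnder_ge_of_eventually_le atTop hub
  have hln : ∀ m : ℕ, α * ((m:ℝ)+1)/((m:ℝ)+2) ≤ liminf f atTop := by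
    intro m
    apply le_liminf_of_le hcob
    filter_upwards [hx m, eventually_ge_atTop 2] with n hn hn2
    have hn1 : (1:ℝ) < (n:ℝ) := by exact_mod_cast hn2
    have hn0 : (0:ℝ) < (n:ℝ) := by linarith
    have hlogn : 0 < Real.log n := Real.log_pos hn1
    have hrpos : (0:ℝ) < (n:ℝ)^(α*((m:ℝ)+1)/((m:ℝ)+2)) := Real.rpow_pos_of_pos hn0 _
    have h1 : (n:ℝ)^(α*((m:ℝ)+1)/((m:ℝ)+2)) ≤ (runZero α n x : ℝ) := by
      refine le_trans (Nat.le_ceil _) ?_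
      exact_mod_cast hn
    have h2 : Real.log ((n:ℝ)^(α*((m:ℝ)+1)/((m:ℝ)+2))) ≤ Real.log (runZero α n x) :=
      Real.log_le_log hrpos h1
    rw [Real.log_rpow hn0] at h2
    show α*((m:ℝ)+1)/((m:ℝ)+2) ≤ Real.log (runZero α n x) / Real.log n
    rw [le_div_iff₀ hlogn]
    exact h2
  apply le_of_forall_lt
  intro c hc
  obtain ⟨m, hm⟩ := exists_nat_gt (α/(α - c))
  have hac' : 0 < α - c := by linarith
  have h1 : c < α * ((m:ℝ)+1)/((m:ℝ)+2) := by
    rw [lt_div_iff₀ (by positivity)]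
    rw [div_lt_iff₀ hac'] at hm
    nlinarith
  exact lt_of_lt_of_le h1 (hln m)
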